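/- Let G be a group and let p be an idempotent ultrafilter on G with respect to the operation p•q defined by: A ∈ p•q iff {x ∈ G : Ax⁻¹ ∈ p} ∈ q. If A ∈ p, then A contains a left finite product set FP_L(x_n) for some sequence (x_n) in G, where FP_L(x_n) consists of all products ∏_{n∈F} x_n with indices taken in decreasing order over finite nonempty F ⊆ ℕ. -/

import Mathlib

/-- The product of `x_n` over `F` with indices taken in decreasing order. -/
def prodDec {G : Type*} [Group G] (F : Finset ℕ) (x : ℕ → G) : G :=
  ((F.sort (· ≤ ·)).reverse.map x).prod

/-- The left finite product set of a sequence `(x_n)` in `G`. -/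
def FPL {G : Type*} [Group G] (x : ℕ → G) : Set G :=
  { g | ∃ F : Finset ℕ, F.Nonempty ∧ g = prodDec F x }

/-- The Stone–Čech convolution `p • q` on ultrafilters: `A ∈ p • q ↔ {x | Ax⁻¹ ∈ p} ∈ q`. -/
def umul {G : Type*} [Group G] (p q : Ultrafilter G) : Ultrafilter G :=
  q.bind fun x => p.map (· * x)

attribute [local instance] Ultrafilter.semigroup Ultrafilter.mul

open Hindman MulOpposite in
/-- Ordered finite products of a stream belong to `FP`. -/
theorem list_prod_mem_FP {M : Type*} [Monoid M] (b : Stream' M) :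
    ∀ l : List ℕ, l.Pairwise (· < ·) → l ≠ [] → ∀ k, (∀ i ∈ l, k ≤ i) →
      (l.map b.get).prod ∈ FP (b.drop k) := by
  intro l
  induction l with
  | nil => intro _ h; exact absurd rfl h
  | cons n l ih =>
    intro hs _ k hk
    have hkn : k ≤ n := hk n List.mem_cons_self
    cases l with
    | nil =>
      simp only [List.map_cons, List.map_nil, List.prod_cons, List.prod_nil, mul_one]
      have : b.get n = (b.drop k).get (n - k) := by
        rw [Stream'.get_drop, Nat.add_sub_of_le hkn]
      rw [this]
      exact FP.singleton _ _
    | cons m l' =>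
      have hlt : ∀ i ∈ m :: l', n < i := by
        intro i hi
        exact (List.pairwise_cons.mp hs).1 i hi
      have hrest : ((m :: l').map b.get).prod ∈ FP (b.drop (n + 1)) := by
        apply ih (List.pairwise_cons.mp hs).2 (by simp) (n + 1)
        intro i hi; exact hlt i hi
      have h1 : b.get n * ((m :: l').map b.get).prod ∈ FP (b.drop n) := by
        rw [← Stream'.head_drop]
        apply FP.cons
        rw [Stream'.tail_eq_drop, Stream'.drop_drop, Nat.add_comm]
        rwa [Nat.add_comm]
      have h2 : FP (b.drop n) ⊆ FP (b.drop k) := by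
        have : (b.drop k).drop (n - k) = b.drop n := by
          rw [Stream'.drop_drop, Nat.add_sub_of_le hkn]
        rw [← this]
        exact FP_drop_subset_FP _ _
      simpa using h2 h1

/-- If `p` is an idempotent ultrafilter in `(βG, •)` and `A ∈ p`, then `A` contains a
left finite product set `FP_L(x_n)` for some sequence `(x_n)` in `G`. -/
theorem stmt3 {G : Type*} [Group G] (p : Ultrafilter G) (hp : umul p p = p)
    (A : Set G) (hA : A ∈ p) :
    ∃ x : ℕ → G, FPL x ⊆ A := by
  classical
  open MulOpposite Hindman in
  -- transfer to the opposite group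
  set P : Ultrafilter Gᵐᵒᵖ := p.map op with hP
  have hmem : ∀ s : Set Gᵐᵒᵖ, s ∈ P ↔ {a : G | op a ∈ s} ∈ p := fun s => Iff.rfl
  have hidem : P * P = P := by
    ext s
    show {g : G | op g ∈ s} ∈ umul p p ↔ {g : G | op g ∈ s} ∈ p
    rw [hp]
  have hAop : op '' A ∈ P := by
    rw [hmem]
    have : {a : G | op a ∈ op '' A} = A := by
      ext a; simp [op_injective.mem_set_image]
    rwa [this]
  obtain ⟨b, hb⟩ := exists_FP_of_large P hidem (op '' A) hAop
  refine ⟨fun n => unop (b.get n), ?_⟩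
  rintro g ⟨F, hF, rfl⟩
  have key : op (prodDec F (fun n => unop (b.get n))) ∈ FP b := by
    unfold prodDec
    rw [op_list_prod, List.map_map, List.map_reverse, List.reverse_reverse]
    have hcomp : (op ∘ fun n => unop (b.get n)) = b.get := by
      funext n; simp
    rw [hcomp]
    have hne : F.sort (· ≤ ·) ≠ [] := by
      intro h
      have hl := Finset.length_sort (α := ℕ) (· ≤ ·) (s := F)
      rw [h] at hl
      simp only [List.length_nil] at hl
      exact hF.ne_empty (Finset.card_eq_zero.mp hl.symm)
    have := list_prod_mem_FP b (F.sort (· ≤ ·)) (Finset.sortedLT_sort F).pairwise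
      hne 0 (fun i _ => Nat.zero_le i)
    simpa using this
  have := hb key
  obtain ⟨a, ha, hae⟩ := this
  have : a = prodDec F (fun n => unop (b.get n)) := op_injective hae
  rwa [← this]
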